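/- Define F on the positive integers by F(n) = n/3 if n ≡ 0 (mod 3); F(n) = (3n+1)/2 if n ≡ 7 or 11 (mod 12); F(n) = (n+1)/2 if n ≡ 1 or 5 (mod 12). Then for every positive integer n there exists k ≥ 0 with F^(k)(n) = 1, i.e., every trajectory of F reaches 1. -/

import Mathlib

/-- Farkas's map: F(n) = n/3 if 3 ∣ n; F(n) = (3n+1)/2 if n ≡ 7, 11 (mod 12);
F(n) = (n+1)/2 if n ≡ 1, 5 (mod 12). -/
def farkasF (n : ℕ) : ℕ :=
  if n % 3 = 0 then n / 3
  else if n % 12 = 7 ∨ n % 12 = 11 then (3 * n + 1) / 2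
  else (n + 1) / 2

lemma farkas_grow : ∀ a b n : ℕ, b % 2 = 1 → n + 1 = 2 ^ (a + 1) * b → n % 3 ≠ 0 →
    ∃ k, farkasF^[k] n + 1 = 2 * 3 ^ a * b := by
  intro a
  induction a with
  | zero => intro b n hb h h3; exact ⟨0, by simpa using by omega⟩
  | succ a ih =>
    intro b n hb h h3
    set M := 2 ^ a * b with hM
    have hMpos : 0 < M := Nat.mul_pos (Nat.pow_pos (by norm_num)) (by omega)
    have hM1 : n + 1 = 4 * M := by rw [hM, h]; ring
    have hmod4 : n % 4 = 3 := by omega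
    have h12 : n % 12 = 7 ∨ n % 12 = 11 := by omega
    have hF : farkasF n = 6 * M - 1 := by
      unfold farkasF
      rw [if_neg h3, if_pos h12]
      omega
    have hrw : 2 ^ (a + 1) * (3 * b) = 6 * M := by rw [hM, pow_succ]; ring
    have hF1 : farkasF n + 1 = 2 ^ (a + 1) * (3 * b) := by rw [hF]; omega
    have hdvd : 3 ∣ farkasF n + 1 := ⟨2 * M, by omega⟩
    have hF3 : farkasF n % 3 ≠ 0 := by omega
    obtain ⟨k, hk⟩ := ih (3 * b) (farkasF n) (by omega) hF1 hF3
    refine ⟨k + 1, ?_⟩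
    rw [Function.iterate_succ_apply, hk]
    ring

lemma farkas_div3 : ∀ i c : ℕ, 0 < c → farkasF^[i] (3 ^ i * c) = c := by
  intro i
  induction i with
  | zero => intro c _; simp
  | succ i ih =>
    intro c hc
    rw [Function.iterate_succ_apply]
    have hd : (3 ^ (i + 1) * c) % 3 = 0 := by
      have : 3 ∣ 3 ^ (i + 1) * c := Dvd.dvd.mul_right (dvd_pow_self 3 (Nat.succ_ne_zero i)) c
      omega
    have h : farkasF (3 ^ (i + 1) * c) = 3 ^ i * c := by
      unfold farkasF
      rw [if_pos hd, pow_succ, mul_right_comm, Nat.mul_div_cancel _ (by norm_num)]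
    rw [h]; exact ih c hc

/-- (Farkas, 2005) Every trajectory of F on the positive integers reaches 1. -/
theorem farkas_reaches_one (n : ℕ) (hn : 0 < n) : ∃ k : ℕ, farkasF^[k] n = 1 := by
  induction n using Nat.strong_induction_on with
  | _ n ih =>
  rcases eq_or_lt_of_le (Nat.succ_le_of_lt hn) with h1 | h1
  · exact ⟨0, h1.symm⟩
  by_cases h3 : n % 3 = 0
  · have hF : farkasF n = n / 3 := by unfold farkasF; rw [if_pos h3]
    obtain ⟨k, hk⟩ := ih (n / 3) (by omega) (by omega)
    exact ⟨k + 1, by rw [Function.iterate_succ_apply, hF, hk]⟩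
  by_cases h12 : n % 12 = 7 ∨ n % 12 = 11
  · -- growth case
    have hmod4 : n % 4 = 3 := by omega
    obtain ⟨a, b, hb, hab⟩ := Nat.exists_eq_pow_mul_and_not_dvd (n := n + 1) (by omega) 2 (by norm_num)
    have hbodd : b % 2 = 1 := by omega
    have hbpos : 0 < b := by omega
    have ha2 : 2 ≤ a := by
      by_contra hcon
      interval_cases a <;> omega
    obtain ⟨a', rfl⟩ : ∃ a', a = a' + 1 + 1 := ⟨a - 2, by omega⟩
    obtain ⟨k, hk⟩ := farkas_grow (a' + 1) b n hbodd hab h3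
    set m := farkasF^[k] n with hm
    have hm1 : m + 1 = 2 * (3 ^ (a' + 1) * b) := by rw [hk]; ring
    have hdvd3 : 3 ∣ m + 1 := ⟨2 * 3 ^ a' * b, by rw [hm1]; ring⟩
    have hm3 : m % 3 = 2 := by omega
    have h2 : (3 ^ (a' + 1) * b) % 2 = 1 := by
      simp [Nat.mul_mod, Nat.pow_mod, hbodd]
    have hmodd : m % 2 = 1 := by omega
    have hm4 : m % 4 = 1 := by omega
    have hFm : farkasF m = 3 ^ (a' + 1) * b := by
      unfold farkasF
      rw [if_neg (by omega), if_neg (by omega)]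
      omega
    have e1 : farkasF^[k + 1] n = 3 ^ (a' + 1) * b := by
      rw [Function.iterate_succ_apply', ← hm, hFm]
    have hiter : farkasF^[(a' + 1) + (k + 1)] n = b := by
      rw [Function.iterate_add_apply, e1, farkas_div3 _ _ hbpos]
    have hblt : b < n := by
      have h4 : 4 * b ≤ 2 ^ (a' + 1 + 1) * b := by
        have : (4:ℕ) ≤ 2 ^ (a' + 1 + 1) := by
          calc (4:ℕ) = 2 ^ 2 := by norm_num
          _ ≤ 2 ^ (a' + 1 + 1) := Nat.pow_le_pow_right (by norm_num) (by omega)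
        exact Nat.mul_le_mul_right b this
      omega
    obtain ⟨k', hk'⟩ := ih b hblt hbpos
    exact ⟨k' + ((a' + 1) + (k + 1)), by rw [Function.iterate_add_apply, hiter, hk']⟩
  · have hF : farkasF n = (n + 1) / 2 := by unfold farkasF; rw [if_neg h3, if_neg h12]
    obtain ⟨k, hk⟩ := ih ((n + 1) / 2) (by omega) (by omega)
    exact ⟨k + 1, by rw [Function.iterate_succ_apply, hF, hk]⟩
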